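/- Let H be the d×d orthonormal Walsh–Hadamard matrix and D' a random diagonal matrix with i.i.d. ±1 diagonal entries. There exists a universal constant c₇ > 0 such that for any unit vector x ∈ R^d and any t > 0, P(‖H D' x‖₄ ≥ t·d^{−1/4}) ≤ e^{1 − c₇ t⁴}. -/

import Mathlib

open Real Finset

/-- The sign `±1` associated to a Boolean. -/
def sgn (b : Bool) : ℝ := if b then 1 else -1

/-- The `d × d` orthonormal Walsh–Hadamard matrix for `d = 2^n`. -/
noncomputable def WH (n : ℕ) : Matrix (Fin (2 ^ n)) (Fin (2 ^ n)) ℝ := fun i j =>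
  (Real.sqrt (2 ^ n))⁻¹ *
    (-1 : ℝ) ^ (∑ b ∈ Finset.range n, ((i : ℕ).testBit b).toNat * ((j : ℕ).testBit b).toNat)


def df : ℕ → ℕ
  | 0 => 1
  | k + 1 => (2 * k + 1) * df k

lemma df_mul : ∀ k : ℕ, df k * (2 ^ k * Nat.factorial k) = Nat.factorial (2 * k)
  | 0 => rfl
  | k + 1 => by
    have h := df_mul k
    have h2 : 2 * (k + 1) = 2 * k + 1 + 1 := by ring
    rw [df, h2, Nat.factorial_succ, Nat.factorial_succ, Nat.factorial_succ, pow_succ, ← h]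
    ring

lemma two_pow_fact_le : ∀ i : ℕ, 2 ^ i * Nat.factorial i ≤ Nat.factorial (2 * i)
  | 0 => le_refl 1
  | i + 1 => by
    have h := two_pow_fact_le i
    have h2 : 2 * (i + 1) = 2 * i + 1 + 1 := by ring
    rw [h2, Nat.factorial_succ, Nat.factorial_succ, Nat.factorial_succ, pow_succ]
    calc 2 ^ i * 2 * ((i + 1) * Nat.factorial i)
        = (2 * (i+1)) * (2 ^ i * Nat.factorial i) := by ring
      _ ≤ (2 * (i+1)) * Nat.factorial (2*i) := Nat.mul_le_mul_left _ h
      _ ≤ ((2*i+1+1) * (2*i+1)) * Nat.factorial (2*i) := by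
          apply Nat.mul_le_mul_right; nlinarith
      _ = (2*i+1+1) * ((2*i+1) * Nat.factorial (2*i)) := by ring

lemma df_le : ∀ k : ℕ, df k ≤ 2 ^ k * Nat.factorial k
  | 0 => le_refl 1
  | k + 1 => by
    have h := df_le k
    rw [df, Nat.factorial_succ, pow_succ]
    calc (2 * k + 1) * df k ≤ (2 * (k+1)) * (2 ^ k * Nat.factorial k) :=
          Nat.mul_le_mul (by omega) h
      _ = 2 ^ k * 2 * ((k + 1) * Nat.factorial k) := by ring

lemma comb_key {k i : ℕ} (h : i ≤ k) :
    Nat.choose (2*k) (2*i) * df (k - i) ≤ df k * Nat.choose k i := by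
  have hM : 0 < Nat.factorial (2*i) * (2 ^ (k-i) * Nat.factorial (k-i)) *
      (2 ^ i * Nat.factorial i) := by positivity
  apply Nat.le_of_mul_le_mul_right _ hM
  have e1 : Nat.choose (2*k) (2*i) * Nat.factorial (2*i) * Nat.factorial (2*k - 2*i)
      = Nat.factorial (2*k) := Nat.choose_mul_factorial_mul_factorial (by omega)
  have e2 : df (k - i) * (2 ^ (k-i) * Nat.factorial (k-i)) = Nat.factorial (2*(k-i)) :=
    df_mul _
  have e2' : 2*(k-i) = 2*k - 2*i := by omega
  have e3 : df k * (2 ^ k * Nat.factorial k) = Nat.factorial (2*k) := df_mul k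
  have e4 : Nat.choose k i * Nat.factorial i * Nat.factorial (k - i) = Nat.factorial k :=
    Nat.choose_mul_factorial_mul_factorial h
  have hA : Nat.choose (2*k) (2*i) * df (k-i) *
      (Nat.factorial (2*i) * (2 ^ (k-i) * Nat.factorial (k-i)) * (2 ^ i * Nat.factorial i))
      = Nat.factorial (2*k) * (2 ^ i * Nat.factorial i) := by
    calc Nat.choose (2*k) (2*i) * df (k-i) *
        (Nat.factorial (2*i) * (2 ^ (k-i) * Nat.factorial (k-i)) * (2 ^ i * Nat.factorial i))
        = Nat.choose (2*k) (2*i) * Nat.factorial (2*i) *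
            (df (k-i) * (2 ^ (k-i) * Nat.factorial (k-i))) * (2 ^ i * Nat.factorial i) := by
          ring
      _ = Nat.choose (2*k) (2*i) * Nat.factorial (2*i) * Nat.factorial (2*k - 2*i) *
            (2 ^ i * Nat.factorial i) := by rw [e2, e2']
      _ = Nat.factorial (2*k) * (2 ^ i * Nat.factorial i) := by rw [e1]
  have hB : df k * Nat.choose k i *
      (Nat.factorial (2*i) * (2 ^ (k-i) * Nat.factorial (k-i)) * (2 ^ i * Nat.factorial i))
      = Nat.factorial (2*k) * Nat.factorial (2*i) := by
    calc df k * Nat.choose k i *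
        (Nat.factorial (2*i) * (2 ^ (k-i) * Nat.factorial (k-i)) * (2 ^ i * Nat.factorial i))
        = df k * (2 ^ (k-i) * 2 ^ i * Nat.factorial k) * Nat.factorial (2*i) := by
          rw [← e4]; ring
      _ = df k * (2 ^ k * Nat.factorial k) * Nat.factorial (2*i) := by
          rw [← pow_add, Nat.sub_add_cancel h]
      _ = Nat.factorial (2*k) * Nat.factorial (2*i) := by rw [e3]
  rw [hA, hB]
  exact Nat.mul_le_mul_left _ (two_pow_fact_le i)


lemma WH_sq (n : ℕ) (i j : Fin (2 ^ n)) : WH n i j ^ 2 = ((2:ℝ)^n)⁻¹ := by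
  unfold WH
  have h1 : ((-1:ℝ) ^ (∑ b ∈ Finset.range n,
      ((i : ℕ).testBit b).toNat * ((j : ℕ).testBit b).toNat)) ^ 2 = 1 := by
    rw [← pow_mul, mul_comm, pow_mul]; norm_num
  rw [mul_pow, h1, mul_one, inv_pow, Real.sq_sqrt (by positivity)]

lemma WH_ortho (n : ℕ) (j k : Fin (2 ^ n)) :
    ∑ i, WH n i j * WH n i k = if j = k then 1 else 0 := by
  have hsq : (Real.sqrt (2^n))⁻¹ * (Real.sqrt (2^n))⁻¹ = ((2:ℝ)^n)⁻¹ := by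
    rw [← mul_inv, Real.mul_self_sqrt (by positivity)]
  by_cases hjk : j = k
  · subst hjk
    simp only [if_pos rfl]
    have : ∀ i : Fin (2^n), WH n i j * WH n i j = ((2:ℝ)^n)⁻¹ := by
      intro i; rw [← sq, WH_sq]
    rw [Finset.sum_congr rfl fun i _ => this i, Finset.sum_const, Finset.card_univ,
      Fintype.card_fin, nsmul_eq_mul]
    push_cast
    field_simp
  · rw [if_neg hjk]
    have hex : ∃ b, ((j:ℕ).testBit b) ≠ ((k:ℕ).testBit b) := by
      by_contra hcon
      push_neg at hcon
      exact hjk (Fin.ext (Nat.eq_of_testBit_eq hcon))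
    obtain ⟨b₀, hb⟩ := hex
    have hb₀n : b₀ < n := by
      by_contra hge
      push_neg at hge
      have h1 : ((j:ℕ).testBit b₀) = false :=
        Nat.testBit_eq_false_of_lt (lt_of_lt_of_le j.isLt (Nat.pow_le_pow_right (by norm_num) hge))
      have h2 : ((k:ℕ).testBit b₀) = false :=
        Nat.testBit_eq_false_of_lt (lt_of_lt_of_le k.isLt (Nat.pow_le_pow_right (by norm_num) hge))
      rw [h1, h2] at hb; exact hb rfl
    have hmem : b₀ ∈ Finset.range n := Finset.mem_range.mpr hb₀n
    have hcjck : ((j:ℕ).testBit b₀).toNat + ((k:ℕ).testBit b₀).toNat = 1 := by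
      cases hj' : (j:ℕ).testBit b₀ <;> cases hk' : (k:ℕ).testBit b₀ <;> simp_all
    have hterm : ∀ i : Fin (2^n), WH n i j * WH n i k =
        ((2:ℝ)^n)⁻¹ * (-1:ℝ) ^ (∑ b ∈ Finset.range n,
          ((i : ℕ).testBit b).toNat * (((j : ℕ).testBit b).toNat + ((k : ℕ).testBit b).toNat)) := by
      intro i
      unfold WH
      rw [mul_mul_mul_comm, hsq, ← pow_add, ← Finset.sum_add_distrib]
      congr 2
      exact Finset.sum_congr rfl fun b _ => (mul_add _ _ _).symm
    rw [Finset.sum_congr rfl fun i _ => hterm i, ← Finset.mul_sum]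
    suffices hz : (∑ i : Fin (2^n), (-1:ℝ) ^ (∑ b ∈ Finset.range n,
        ((i : ℕ).testBit b).toNat * (((j : ℕ).testBit b).toNat + ((k : ℕ).testBit b).toNat))) = 0 by
      rw [hz, mul_zero]
    have hppos : (2:ℕ)^b₀ < 2^n := Nat.pow_lt_pow_right (by norm_num) hb₀n
    set g : Fin (2^n) → Fin (2^n) := fun i => ⟨(i:ℕ) ^^^ 2^b₀, Nat.xor_lt_two_pow i.isLt hppos⟩
      with hg
    have htb : ∀ (i : Fin (2^n)) (b : ℕ), ((g i : ℕ)).testBit b =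
        if b = b₀ then !((i:ℕ).testBit b) else ((i:ℕ).testBit b) := by
      intro i b
      show ((i:ℕ) ^^^ 2^b₀).testBit b = _
      rw [Nat.testBit_xor, Nat.testBit_two_pow]
      by_cases hbb : b = b₀
      · subst hbb; simp
      · simp [hbb, Ne.symm hbb]
    have hsplit : ∀ i : Fin (2^n), (-1:ℝ) ^ (∑ b ∈ Finset.range n,
        ((i : ℕ).testBit b).toNat * (((j : ℕ).testBit b).toNat + ((k : ℕ).testBit b).toNat)) =
        (-1:ℝ) ^ (∑ b ∈ (Finset.range n).erase b₀,
          ((i : ℕ).testBit b).toNat * (((j : ℕ).testBit b).toNat + ((k : ℕ).testBit b).toNat)) *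
          (-1:ℝ) ^ (((i:ℕ).testBit b₀).toNat) := by
      intro i
      rw [← Finset.add_sum_erase _ _ hmem, pow_add, mul_comm]
      congr 2
      rw [hcjck, mul_one]
    have hkey : ∀ i : Fin (2^n), (-1:ℝ) ^ (∑ b ∈ Finset.range n,
        ((g i : ℕ).testBit b).toNat * (((j : ℕ).testBit b).toNat + ((k : ℕ).testBit b).toNat)) =
        (-1:ℝ) ^ (∑ b ∈ (Finset.range n).erase b₀,
          ((i : ℕ).testBit b).toNat * (((j : ℕ).testBit b).toNat + ((k : ℕ).testBit b).toNat)) *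
          (-1:ℝ) ^ ((!((i:ℕ).testBit b₀)).toNat) := by
      intro i
      rw [hsplit (g i)]
      congr 2
      · apply Finset.sum_congr rfl
        intro b hbmem
        have hne : b ≠ b₀ := Finset.ne_of_mem_erase hbmem
        rw [htb, if_neg hne]
      · rw [htb, if_pos rfl]
    apply Finset.sum_ninvolution g
    · intro i
      rw [hsplit i, hkey i]
      cases h : ((i:ℕ).testBit b₀) <;> simp [h] <;> ring
    · intro i _ hcon
      have h2 := congrArg (fun z : Fin (2^n) => ((z:ℕ)).testBit b₀) hcon
      rw [htb, if_pos rfl] at h2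
      cases hh : ((i:ℕ).testBit b₀) <;> rw [hh] at h2 <;> simp at h2
    · intro i; exact Finset.mem_univ _
    · intro i
      apply Fin.ext
      show ((i:ℕ) ^^^ 2^b₀) ^^^ 2^b₀ = (i:ℕ)
      rw [Nat.xor_assoc, Nat.xor_self, Nat.xor_zero]



lemma WH_parseval (n : ℕ) (v : Fin (2 ^ n) → ℝ) :
    ∑ i, ((WH n).mulVec v i) ^ 2 = ∑ j, v j ^ 2 := by
  simp only [Matrix.mulVec, dotProduct]
  calc ∑ i, (∑ j, WH n i j * v j) ^ 2
      = ∑ i, ∑ j, ∑ k, (WH n i j * v j) * (WH n i k * v k) := by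
        apply Finset.sum_congr rfl; intro i _
        rw [sq, Finset.sum_mul_sum]
    _ = ∑ j, ∑ k, ∑ i, (WH n i j * v j) * (WH n i k * v k) := by
        rw [Finset.sum_comm]
        apply Finset.sum_congr rfl; intro j _
        rw [Finset.sum_comm]
    _ = ∑ j, ∑ k, (v j * v k) * ∑ i, WH n i j * WH n i k := by
        apply Finset.sum_congr rfl; intro j _
        apply Finset.sum_congr rfl; intro k _
        rw [Finset.mul_sum]
        apply Finset.sum_congr rfl; intro i _
        ring
    _ = ∑ j, v j ^ 2 := by
        apply Finset.sum_congr rfl; intro j _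
        rw [Finset.sum_eq_single j]
        · rw [WH_ortho, if_pos rfl, mul_one, sq]
        · intro k _ hk
          rw [WH_ortho, if_neg (Ne.symm hk), mul_zero]
        · intro h; exact absurd (Finset.mem_univ j) h




lemma khintchine : ∀ (m : ℕ) (k : ℕ) (a : Fin m → ℝ),
    ∑ ε : Fin m → Bool, (∑ j, sgn (ε j) * a j) ^ (2*k)
      ≤ 2^m * df k * (∑ j, a j ^ 2) ^ k := by
  intro m
  induction m with
  | zero =>
    intro k a
    have h0 : ∀ ε : Fin 0 → Bool, (∑ j, sgn (ε j) * a j) = 0 := by intro ε; simp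
    rw [Finset.sum_congr rfl fun ε _ => by rw [h0 ε]]
    have h1 : (∑ j : Fin 0, a j ^ 2) = 0 := by simp
    rw [h1]
    cases k with
    | zero => simp [df]
    | succ k =>
      rw [zero_pow (by omega), zero_pow (by omega)]
      simp
  | succ m ih =>
    intro k a
    -- reindex the sum over Fin (m+1) → Bool
    have hre : ∀ F : (Fin (m+1) → Bool) → ℝ,
        ∑ ε : Fin (m+1) → Bool, F ε
          = ∑ ε : Fin m → Bool, (F (Fin.cons true ε) + F (Fin.cons false ε)) := by
      intro F
      rw [← ((Fin.consEquiv (fun _ : Fin (m+1) => Bool)).sum_comp F)]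
      rw [Fintype.sum_prod_type_right]
      apply Finset.sum_congr rfl; intro ε _
      rw [Fintype.sum_bool]
      rfl
    rw [hre]
    set T : (Fin m → Bool) → ℝ := fun ε => ∑ j : Fin m, sgn (ε j) * a j.succ with hT
    have hinner : ∀ (b : Bool) (ε : Fin m → Bool),
        (∑ j : Fin (m+1), sgn ((Fin.cons b ε : Fin (m+1) → Bool) j) * a j)
          = sgn b * a 0 + T ε := by
      intro b ε
      rw [Fin.sum_univ_succ]
      simp [hT]
    have hstep : ∀ ε : Fin m → Bool,
        (∑ j : Fin (m+1), sgn ((Fin.cons true ε : Fin (m+1) → Bool) j) * a j) ^ (2*k)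
        + (∑ j : Fin (m+1), sgn ((Fin.cons false ε : Fin (m+1) → Bool) j) * a j) ^ (2*k)
        = ∑ r ∈ Finset.range (2*k+1),
            (a 0 ^ r + (- a 0) ^ r) * T ε ^ (2*k - r) * (Nat.choose (2*k) r) := by
      intro ε
      rw [hinner, hinner]
      have s1 : sgn true = 1 := rfl
      have s2 : sgn false = -1 := rfl
      rw [s1, s2, one_mul, neg_one_mul]
      rw [add_pow, add_pow, ← Finset.sum_add_distrib]
      apply Finset.sum_congr rfl; intro r _
      ring
    rw [Finset.sum_congr rfl fun ε _ => hstep ε]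
    rw [Finset.sum_comm]
    -- now bound each r-term
    have hswap : ∀ r, (∑ ε : Fin m → Bool,
        (a 0 ^ r + (- a 0) ^ r) * T ε ^ (2*k - r) * (Nat.choose (2*k) r))
        = (a 0 ^ r + (- a 0) ^ r) * (∑ ε : Fin m → Bool, T ε ^ (2*k - r))
            * (Nat.choose (2*k) r) := by
      intro r
      rw [← Finset.sum_mul, ← Finset.mul_sum]
    rw [Finset.sum_congr rfl fun r _ => hswap r]
    have hRHS : (∑ j : Fin (m+1), a j ^ 2) = a 0 ^ 2 + ∑ j : Fin m, a j.succ ^ 2 :=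
      Fin.sum_univ_succ _
    rw [hRHS]
    set σ : ℝ := ∑ j : Fin m, a j.succ ^ 2 with hσ
    have hσnn : 0 ≤ σ := by rw [hσ]; positivity
    -- even/odd split
    rw [← Finset.sum_filter_add_sum_filter_not (Finset.range (2*k+1)) (fun r => Even r)]
    have hodd : (∑ r ∈ (Finset.range (2*k+1)).filter (fun r => ¬ Even r),
        (a 0 ^ r + (- a 0) ^ r) * (∑ ε : Fin m → Bool, T ε ^ (2*k - r))
          * (Nat.choose (2*k) r)) = 0 := by
      apply Finset.sum_eq_zero
      intro r hr
      have hodd' : Odd r := Nat.not_even_iff_odd.mp (Finset.mem_filter.mp hr).2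
      rw [hodd'.neg_pow, add_neg_cancel, zero_mul, zero_mul]
    rw [hodd, add_zero]
    have heo : (∑ r ∈ (Finset.range (2*k+1)).filter (fun r => Even r),
        (a 0 ^ r + (- a 0) ^ r) * (∑ ε : Fin m → Bool, T ε ^ (2*k - r))
          * (Nat.choose (2*k) r))
        = ∑ i ∈ Finset.range (k+1),
        (a 0 ^ (2*i) + (- a 0) ^ (2*i)) * (∑ ε : Fin m → Bool, T ε ^ (2*k - 2*i))
          * (Nat.choose (2*k) (2*i)) := by
      apply Finset.sum_nbij' (fun r => r / 2) (fun i => 2 * i)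
      · intro r hr
        have h1 := Finset.mem_filter.mp hr
        have h2 := Finset.mem_range.mp h1.1
        have h3 := Nat.even_iff.mp h1.2
        rw [Finset.mem_range]
        omega
      · intro i hi
        have h2 := Finset.mem_range.mp hi
        rw [Finset.mem_filter, Finset.mem_range]
        constructor
        · omega
        · exact even_two_mul i
      · intro r hr
        have h1 := Finset.mem_filter.mp hr
        have h3 := Nat.even_iff.mp h1.2
        omega
      · intro i _; omega
      · intro r hr
        have h1 := Finset.mem_filter.mp hr
        have h3 := Nat.even_iff.mp h1.2
        have h4 : 2 * (r / 2) = r := by omega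
        rw [h4]
    rw [heo]
    have hterm : ∀ i ∈ Finset.range (k+1),
        (a 0 ^ (2*i) + (- a 0) ^ (2*i)) * (∑ ε : Fin m → Bool, T ε ^ (2*k - 2*i))
          * (Nat.choose (2*k) (2*i))
        ≤ 2^(m+1) * df k * ((a 0 ^ 2) ^ i * σ ^ (k-i) * (Nat.choose k i)) := by
      intro i hi
      have hik : i ≤ k := by have := Finset.mem_range.mp hi; omega
      have hIH : (∑ ε : Fin m → Bool, T ε ^ (2*k - 2*i)) ≤ 2^m * df (k-i) * σ ^ (k-i) := by
        have h2 : 2*k - 2*i = 2*(k-i) := by omega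
        rw [h2, hT, hσ]
        exact ih (k-i) _
      have hev : (- a 0) ^ (2*i) = a 0 ^ (2*i) := (even_two_mul i).neg_pow _
      have hpm : (a 0 : ℝ) ^ (2*i) = (a 0 ^ 2) ^ i := by rw [pow_mul]
      rw [hev, hpm]
      have hcnn : (0:ℝ) ≤ ((a 0 ^2)^i + (a 0^2)^i) * (Nat.choose (2*k) (2*i)) := by positivity
      calc ((a 0 ^2)^i + (a 0^2)^i) * (∑ ε : Fin m → Bool, T ε ^ (2*k - 2*i))
            * (Nat.choose (2*k) (2*i))
          = (((a 0 ^2)^i + (a 0^2)^i) * (Nat.choose (2*k) (2*i)))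
              * (∑ ε : Fin m → Bool, T ε ^ (2*k - 2*i)) := by ring
        _ ≤ (((a 0 ^2)^i + (a 0^2)^i) * (Nat.choose (2*k) (2*i)))
              * (2^m * df (k-i) * σ ^ (k-i)) := by
            apply mul_le_mul_of_nonneg_left hIH hcnn
        _ = (2^(m+1) * ((a 0 ^2)^i * σ ^ (k-i)))
              * ((Nat.choose (2*k) (2*i) : ℝ) * (df (k-i) : ℝ)) := by
            push_cast; ring
        _ ≤ (2^(m+1) * ((a 0 ^2)^i * σ ^ (k-i)))
              * ((df k : ℝ) * (Nat.choose k i : ℝ)) := by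
            apply mul_le_mul_of_nonneg_left _ (by positivity)
            have := comb_key hik
            exact_mod_cast Nat.cast_le.mpr this
        _ = 2^(m+1) * df k * ((a 0 ^ 2) ^ i * σ ^ (k-i) * (Nat.choose k i)) := by ring
    calc (∑ i ∈ Finset.range (k+1),
        (a 0 ^ (2*i) + (- a 0) ^ (2*i)) * (∑ ε : Fin m → Bool, T ε ^ (2*k - 2*i))
          * (Nat.choose (2*k) (2*i)))
        ≤ ∑ i ∈ Finset.range (k+1),
            2^(m+1) * df k * ((a 0 ^ 2) ^ i * σ ^ (k-i) * (Nat.choose k i)) :=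
          Finset.sum_le_sum hterm
      _ = 2^(m+1) * df k * (a 0 ^ 2 + σ) ^ k := by
          rw [← Finset.mul_sum, ← add_pow]





lemma geom_bound : ∑' k : ℕ, ((2:ℝ) * k + 1) * (1/4)^k = 20/9 := by
  have h4 : ‖(1/4 : ℝ)‖ < 1 := by rw [Real.norm_eq_abs]; rw [abs_of_pos] <;> norm_num
  have hs1 : Summable fun k : ℕ => ((k:ℝ) * (1/4)^k) := by
    have := summable_pow_mul_geometric_of_norm_lt_one (R := ℝ) 1 h4
    apply this.congr; intro k; rw [pow_one]
  have hs2 : Summable fun k : ℕ => ((1:ℝ)/4)^k := summable_geometric_of_lt_one (by norm_num) (by norm_num)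
  have hsplit : ∀ k : ℕ, ((2:ℝ) * k + 1) * (1/4)^k = 2 * ((k:ℝ) * (1/4)^k) + (1/4)^k := by
    intro k; ring
  rw [tsum_congr hsplit, Summable.tsum_add (hs1.mul_left 2) hs2, tsum_mul_left,
    tsum_coe_mul_geometric_of_norm_lt_one h4, tsum_geometric_of_lt_one (by norm_num) (by norm_num)]
  norm_num

lemma coord_bound (m : ℕ) (a : Fin m → ℝ) (ha : ∑ j, a j ^ 2 = 1) :
    ∑ ε : Fin m → Bool, ((∑ j, sgn (ε j) * a j) ^ 2
      * Real.exp ((1/8) * (∑ j, sgn (ε j) * a j) ^ 2)) ≤ (20/9) * 2^m := by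
  set S : (Fin m → Bool) → ℝ := fun ε => ∑ j, sgn (ε j) * a j with hS
  have hexp : ∀ ε : Fin m → Bool, S ε ^ 2 * Real.exp ((1/8) * S ε ^ 2)
      = ∑' k : ℕ, (1/8:ℝ)^k * (S ε ^ 2) ^ (k+1) / k.factorial := by
    intro ε
    rw [Real.exp_eq_exp_ℝ, NormedSpace.exp_eq_tsum_div, ← tsum_mul_left]
    apply tsum_congr
    intro k
    rw [mul_pow]
    field_simp
    ring
  have hsumε : ∀ ε : Fin m → Bool, Summable (fun k : ℕ => (1/8:ℝ)^k * (S ε ^ 2) ^ (k+1) / k.factorial) := by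
    intro ε
    have h := (Real.summable_pow_div_factorial ((1/8) * S ε ^2)).mul_left (S ε ^ 2)
    apply h.congr
    intro k
    rw [mul_pow]
    field_simp
    ring
  rw [Finset.sum_congr rfl fun ε _ => hexp ε]
  rw [← Summable.tsum_finsetSum (fun ε _ => hsumε ε)]
  -- termwise bound
  have hterm : ∀ k : ℕ, (∑ ε : Fin m → Bool, (1/8:ℝ)^k * (S ε ^ 2) ^ (k+1) / k.factorial)
      ≤ (2 * k + 1) * (1/4)^k * 2^m := by
    intro k
    have h1 : (∑ ε : Fin m → Bool, (1/8:ℝ)^k * (S ε ^ 2) ^ (k+1) / k.factorial)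
        = ((1/8:ℝ)^k / k.factorial) * ∑ ε : Fin m → Bool, S ε ^ (2*(k+1)) := by
      rw [Finset.mul_sum]
      apply Finset.sum_congr rfl
      intro ε _
      rw [← pow_mul, mul_comm 2 (k+1)]
      rw [pow_mul]
      ring
    rw [h1]
    have h2 : (∑ ε : Fin m → Bool, S ε ^ (2*(k+1))) ≤ 2^m * df (k+1) := by
      have := khintchine m (k+1) a
      rw [ha, one_pow, mul_one] at this
      rw [hS]
      exact this
    calc ((1/8:ℝ)^k / k.factorial) * ∑ ε : Fin m → Bool, S ε ^ (2*(k+1))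
        ≤ ((1/8:ℝ)^k / k.factorial) * (2^m * df (k+1)) := by
          apply mul_le_mul_of_nonneg_left h2 (by positivity)
      _ ≤ (2 * k + 1) * (1/4)^k * 2^m := by
          have hdf : (df (k+1) : ℝ) ≤ (2*k+1) * (2^k * k.factorial) := by
            have : df (k+1) = (2*k+1) * df k := rfl
            rw [this]
            push_cast
            apply mul_le_mul_of_nonneg_left _ (by positivity)
            exact_mod_cast df_le k
          have hfpos : (0:ℝ) < k.factorial := by exact_mod_cast k.factorial_pos
          rw [div_mul_eq_mul_div, div_le_iff₀ hfpos]
          calc (1/8:ℝ)^k * (2^m * df (k+1)) ≤ (1/8:ℝ)^k * (2^m * ((2*k+1) * (2^k * k.factorial))) := by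
                apply mul_le_mul_of_nonneg_left _ (by positivity)
                apply mul_le_mul_of_nonneg_left hdf (by positivity)
            _ = (2 * k + 1) * ((1/8:ℝ)^k * 2^k) * 2^m * k.factorial := by ring
            _ = (2 * k + 1) * (1/4:ℝ)^k * 2^m * k.factorial := by
                rw [← mul_pow]; norm_num
  -- sum up
  have hRHSsum : Summable (fun k : ℕ => ((2:ℝ) * k + 1) * (1/4)^k * 2^m) := by
    apply Summable.mul_right
    have h4 : ‖(1/4 : ℝ)‖ < 1 := by rw [Real.norm_eq_abs]; rw [abs_of_pos] <;> norm_num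
    have hs1 : Summable fun k : ℕ => ((k:ℝ) * (1/4)^k) := by
      have := summable_pow_mul_geometric_of_norm_lt_one (R := ℝ) 1 h4
      apply this.congr; intro k; rw [pow_one]
    have hs2 : Summable fun k : ℕ => ((1:ℝ)/4)^k :=
      summable_geometric_of_lt_one (by norm_num) (by norm_num)
    apply ((hs1.mul_left 2).add hs2).congr
    intro k; ring
  have hLHSsum : Summable (fun k : ℕ => ∑ ε : Fin m → Bool, (1/8:ℝ)^k * (S ε ^ 2) ^ (k+1) / k.factorial) := by
    apply Summable.of_nonneg_of_le _ hterm hRHSsum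
    intro k
    apply Finset.sum_nonneg
    intro ε _
    positivity
  calc (∑' k : ℕ, ∑ ε : Fin m → Bool, (1/8:ℝ)^k * (S ε ^ 2) ^ (k+1) / k.factorial)
      ≤ ∑' k : ℕ, ((2:ℝ) * k + 1) * (1/4)^k * 2^m := Summable.tsum_le_tsum hterm hLHSsum hRHSsum
    _ = (20/9) * 2^m := by
        rw [tsum_mul_right, geom_bound]






lemma sgn_sq (b : Bool) : sgn b ^ 2 = 1 := by cases b <;> simp [sgn]

/-- Lemma 1 of the paper: there is a universal constant `c₇ > 0`
such that for any unit vector `x ∈ ℝ^d` (`d = 2^n`) and any `t > 0`,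
`P(‖H D' x‖₄ ≥ t d^{-1/4}) ≤ e^{1 - c₇ t⁴}`, the probability being uniform over the
sign patterns of the diagonal of `D'`. -/
theorem flattening_tail_bound :
    ∃ c₇ > (0 : ℝ), ∀ (n : ℕ) (x : Fin (2 ^ n) → ℝ), ∑ j, x j ^ 2 = 1 →
      ∀ t > (0 : ℝ),
      ((Finset.univ.filter fun ε : Fin (2 ^ n) → Bool =>
          t * ((2 ^ n : ℝ)) ^ (-(1 : ℝ) / 4)
            ≤ (∑ i, ((WH n).mulVec (fun j => sgn (ε j) * x j) i) ^ 4) ^ ((1 : ℝ) / 4)).card : ℝ)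
          / 2 ^ (2 ^ n)
        ≤ Real.exp (1 - c₇ * t ^ 4) := by
  refine ⟨1/8, by norm_num, ?_⟩
  intro n x hx t ht
  have hDpos : (0:ℝ) < (2:ℝ)^n := by positivity
  have hsq : (Real.sqrt ((2:ℝ)^n))^2 = (2:ℝ)^n := Real.sq_sqrt (le_of_lt hDpos)
  -- notation
  set y : (Fin (2^n) → Bool) → Fin (2^n) → ℝ :=
    fun ε => (WH n).mulVec (fun j => sgn (ε j) * x j) with hy
  set Z : (Fin (2^n) → Bool) → ℝ := fun ε => ∑ i, y ε i ^ 4 with hZ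
  have hZnn : ∀ ε, 0 ≤ Z ε := by
    intro ε; apply Finset.sum_nonneg; intro i _; positivity
  -- Parseval
  have hpar : ∀ ε, ∑ i, y ε i ^ 2 = 1 := by
    intro ε
    rw [hy]
    rw [WH_parseval, ← hx]
    apply Finset.sum_congr rfl
    intro j _
    rw [mul_pow, sgn_sq, one_mul]
  -- event bound
  have hev : ∀ ε : Fin (2^n) → Bool,
      (t * ((2:ℝ) ^ n) ^ (-(1 : ℝ) / 4) ≤ (Z ε) ^ ((1 : ℝ) / 4)) →
      (1:ℝ) ≤ Real.exp ((1/8) * ((2:ℝ)^n * Z ε - t^4)) := by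
    intro ε hε
    have h0 : 0 ≤ t * ((2:ℝ) ^ n) ^ (-(1 : ℝ) / 4) := by
      apply mul_nonneg (le_of_lt ht)
      exact le_of_lt (Real.rpow_pos_of_pos hDpos _)
    have h4 := pow_le_pow_left₀ h0 hε 4
    rw [mul_pow] at h4
    have hL : (((2:ℝ) ^ n) ^ (-(1 : ℝ) / 4)) ^ (4:ℕ) = ((2:ℝ)^n)⁻¹ := by
      rw [← Real.rpow_natCast (((2:ℝ) ^ n) ^ (-(1 : ℝ) / 4)) 4, ← Real.rpow_mul (le_of_lt hDpos)]
      norm_num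
      exact Real.rpow_neg_one _
    have hR : ((Z ε) ^ ((1 : ℝ) / 4)) ^ (4:ℕ) = Z ε := by
      rw [← Real.rpow_natCast ((Z ε) ^ ((1 : ℝ) / 4)) 4, ← Real.rpow_mul (hZnn ε)]
      norm_num
    rw [hL, hR] at h4
    apply Real.one_le_exp
    have ht4 : t^4 ≤ (2:ℝ)^n * Z ε := by
      rw [show t^4 * ((2:ℝ)^n)⁻¹ = t^4 / (2:ℝ)^n by ring] at h4
      rw [div_le_iff₀ hDpos] at h4
      linarith [h4]
    nlinarith [ht4]
  -- Jensen
  have hjensen : ∀ ε, Real.exp ((1/8) * ((2:ℝ)^n * Z ε))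
      ≤ ∑ i, y ε i ^ 2 * Real.exp ((1/8) * ((2:ℝ)^n * y ε i ^ 2)) := by
    intro ε
    have h := convexOn_exp.map_sum_le (t := Finset.univ)
      (w := fun i : Fin (2^n) => y ε i ^ 2)
      (p := fun i : Fin (2^n) => (1/8) * ((2:ℝ)^n * y ε i ^ 2))
      (fun i _ => by positivity) (hpar ε) (fun i _ => Set.mem_univ _)
    simp only [smul_eq_mul] at h
    have heq : (∑ i, y ε i ^ 2 * ((1/8) * ((2:ℝ)^n * y ε i ^ 2)))
        = (1/8) * ((2:ℝ)^n * Z ε) := by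
      rw [hZ]
      simp only []
      rw [Finset.mul_sum, Finset.mul_sum]
      apply Finset.sum_congr rfl
      intro i _
      ring
    rw [heq] at h
    exact h
  -- coordinate bound
  have hcoord : ∀ i : Fin (2^n), (∑ ε : Fin (2^n) → Bool,
      y ε i ^ 2 * Real.exp ((1/8) * ((2:ℝ)^n * y ε i ^ 2)))
      ≤ ((2:ℝ)^n)⁻¹ * ((20/9) * 2^(2^n)) := by
    intro i
    have ha' : ∑ j, (Real.sqrt ((2:ℝ)^n) * (WH n i j * x j)) ^ 2 = 1 := by
      rw [← hx]
      apply Finset.sum_congr rfl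
      intro j _
      rw [mul_pow, mul_pow, hsq, WH_sq]
      field_simp
    have hS : ∀ ε : Fin (2^n) → Bool,
        (∑ j, sgn (ε j) * (Real.sqrt ((2:ℝ)^n) * (WH n i j * x j)))
          = Real.sqrt ((2:ℝ)^n) * y ε i := by
      intro ε
      rw [hy]
      show _ = Real.sqrt ((2:ℝ)^n) * ((WH n).mulVec (fun j => sgn (ε j) * x j) i)
      rw [Matrix.mulVec, dotProduct, Finset.mul_sum]
      apply Finset.sum_congr rfl
      intro j _
      ring
    have hpt : ∀ ε : Fin (2^n) → Bool,
        y ε i ^ 2 * Real.exp ((1/8) * ((2:ℝ)^n * y ε i ^ 2))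
        = ((2:ℝ)^n)⁻¹ *
          ((∑ j, sgn (ε j) * (Real.sqrt ((2:ℝ)^n) * (WH n i j * x j))) ^ 2
            * Real.exp ((1/8) * (∑ j, sgn (ε j) * (Real.sqrt ((2:ℝ)^n) * (WH n i j * x j))) ^ 2)) := by
      intro ε
      rw [hS ε, mul_pow, hsq]
      have hne : ((2:ℝ)^n) ≠ 0 := ne_of_gt hDpos
      field_simp
    rw [Finset.sum_congr rfl fun ε _ => hpt ε, ← Finset.mul_sum]
    apply mul_le_mul_of_nonneg_left _ (by positivity)
    exact coord_bound (2^n) _ ha'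
  -- assemble
  have hmain : ((Finset.univ.filter fun ε : Fin (2 ^ n) → Bool =>
      t * ((2 ^ n : ℝ)) ^ (-(1 : ℝ) / 4)
        ≤ (∑ i, ((WH n).mulVec (fun j => sgn (ε j) * x j) i) ^ 4) ^ ((1 : ℝ) / 4)).card : ℝ)
      ≤ (20/9) * Real.exp (-(1/8) * t^4) * 2^(2^n) := by
    calc ((Finset.univ.filter fun ε : Fin (2 ^ n) → Bool =>
        t * ((2 ^ n : ℝ)) ^ (-(1 : ℝ) / 4)
          ≤ (∑ i, ((WH n).mulVec (fun j => sgn (ε j) * x j) i) ^ 4) ^ ((1 : ℝ) / 4)).card : ℝ)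
        = ∑ ε ∈ (Finset.univ.filter fun ε : Fin (2 ^ n) → Bool =>
            t * ((2 ^ n : ℝ)) ^ (-(1 : ℝ) / 4)
              ≤ (∑ i, ((WH n).mulVec (fun j => sgn (ε j) * x j) i) ^ 4) ^ ((1 : ℝ) / 4)),
            (1:ℝ) := by rw [Finset.sum_const, nsmul_eq_mul, mul_one]
      _ ≤ ∑ ε ∈ (Finset.univ.filter fun ε : Fin (2 ^ n) → Bool =>
            t * ((2 ^ n : ℝ)) ^ (-(1 : ℝ) / 4)
              ≤ (∑ i, ((WH n).mulVec (fun j => sgn (ε j) * x j) i) ^ 4) ^ ((1 : ℝ) / 4)),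
            Real.exp ((1/8) * ((2:ℝ)^n * Z ε - t^4)) := by
          apply Finset.sum_le_sum
          intro ε hε
          have hmem := (Finset.mem_filter.mp hε).2
          exact hev ε hmem
      _ ≤ ∑ ε : Fin (2^n) → Bool, Real.exp ((1/8) * ((2:ℝ)^n * Z ε - t^4)) := by
          apply Finset.sum_le_sum_of_subset_of_nonneg (Finset.filter_subset _ _)
          intro ε _ _
          exact le_of_lt (Real.exp_pos _)
      _ = Real.exp (-(1/8) * t^4) * ∑ ε : Fin (2^n) → Bool,
            Real.exp ((1/8) * ((2:ℝ)^n * Z ε)) := by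
          rw [Finset.mul_sum]
          apply Finset.sum_congr rfl
          intro ε _
          rw [← Real.exp_add]
          congr 1
          ring
      _ ≤ Real.exp (-(1/8) * t^4) * ∑ ε : Fin (2^n) → Bool,
            ∑ i, y ε i ^ 2 * Real.exp ((1/8) * ((2:ℝ)^n * y ε i ^ 2)) := by
          apply mul_le_mul_of_nonneg_left _ (le_of_lt (Real.exp_pos _))
          exact Finset.sum_le_sum fun ε _ => hjensen ε
      _ = Real.exp (-(1/8) * t^4) * ∑ i, ∑ ε : Fin (2^n) → Bool,
            y ε i ^ 2 * Real.exp ((1/8) * ((2:ℝ)^n * y ε i ^ 2)) := by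
          rw [Finset.sum_comm]
      _ ≤ Real.exp (-(1/8) * t^4) * ∑ _i : Fin (2^n), ((2:ℝ)^n)⁻¹ * ((20/9) * 2^(2^n)) := by
          apply mul_le_mul_of_nonneg_left _ (le_of_lt (Real.exp_pos _))
          exact Finset.sum_le_sum fun i _ => hcoord i
      _ = (20/9) * Real.exp (-(1/8) * t^4) * 2^(2^n) := by
          rw [Finset.sum_const, Finset.card_univ, Fintype.card_fin, nsmul_eq_mul]
          push_cast
          field_simp
  rw [div_le_iff₀ (by positivity)]
  calc ((Finset.univ.filter fun ε : Fin (2 ^ n) → Bool =>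
      t * ((2 ^ n : ℝ)) ^ (-(1 : ℝ) / 4)
        ≤ (∑ i, ((WH n).mulVec (fun j => sgn (ε j) * x j) i) ^ 4) ^ ((1 : ℝ) / 4)).card : ℝ)
      ≤ (20/9) * Real.exp (-(1/8) * t^4) * 2^(2^n) := hmain
    _ ≤ Real.exp (1 - 1/8 * t^4) * 2^(2^n) := by
        apply mul_le_mul_of_nonneg_right _ (by positivity)
        have h1 : (20/9 : ℝ) ≤ Real.exp 1 := by
          have := Real.exp_one_gt_d9
          nlinarith [this]
        calc (20/9 : ℝ) * Real.exp (-(1/8) * t^4)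
            ≤ Real.exp 1 * Real.exp (-(1/8) * t^4) :=
              mul_le_mul_of_nonneg_right h1 (le_of_lt (Real.exp_pos _))
          _ = Real.exp (1 - 1/8 * t^4) := by
              rw [← Real.exp_add]
              congr 1
              ring
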